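/- arXiv:2510.26939 — 10 statements merged into one kernel-verified Lean document; each statement's English description precedes it below -/
import Mathlib

section
/- For every positive integer n, the largest natural number s such that s² divides n is equal to the number of residue classes a in ℤ/nℤ satisfying a² = 0 in ℤ/nℤ. -/
/-- `chi n` is the largest natural number `s` such that `s ^ 2` divides `n`
(for `n ≥ 1`, since any such `s` satisfies `s ≤ n`). -/
def chi (n : ℕ) : ℕ := Nat.findGreatest (fun s => s ^ 2 ∣ n) n


lemma chi_pos {n : ℕ} (hn : 0 < n) : 0 < chi n :=
  Nat.le_findGreatest (P := fun s => s ^ 2 ∣ n) hn (by simpa using (one_dvd n))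

lemma chi_sq_dvd {n : ℕ} (hn : 0 < n) : (chi n) ^ 2 ∣ n :=
  Nat.findGreatest_spec (P := fun s => s ^ 2 ∣ n) hn (by simpa using (one_dvd n))

lemma chi_factorization {n : ℕ} (hn : 0 < n) (p : ℕ) :
    (chi n).factorization p = n.factorization p / 2 := by
  set S := chi n with hS
  have hS0 : S ≠ 0 := (chi_pos hn).ne'
  have hn0 : n ≠ 0 := hn.ne'
  have hdvd := chi_sq_dvd hn
  have hle : (S ^ 2).factorization ≤ n.factorization :=
    (Nat.factorization_le_iff_dvd (pow_ne_zero 2 hS0) hn0).2 hdvd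
  have hle' : 2 * S.factorization p ≤ n.factorization p := by
    have := hle p
    simpa [Nat.factorization_pow] using this
  rcases Nat.lt_or_ge (S.factorization p) (n.factorization p / 2) with h | h
  · exfalso
    have hp : p.Prime := by
      by_contra hp
      simp [Nat.factorization_eq_zero_of_not_prime _ hp] at h
    have hmul0 : S * p ≠ 0 := mul_ne_zero hS0 hp.pos.ne'
    have hdvd2 : (S * p) ^ 2 ∣ n := by
      rw [← Nat.factorization_le_iff_dvd (pow_ne_zero 2 hmul0) hn0]
      intro q
      have hq2 : ((S * p) ^ 2).factorization q = 2 * (S * p).factorization q := by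
        simp [Nat.factorization_pow]
      rw [hq2, Nat.factorization_mul hS0 hp.pos.ne']
      by_cases hqp : q = p
      · subst hqp
        have h1 : Nat.factorization q q = 1 := Nat.Prime.factorization_self hp
        simp only [Finsupp.add_apply, h1]
        omega
      · have h0 : Nat.factorization p q = 0 := by
          rw [hp.factorization]
          simp [Finsupp.single_apply, Ne.symm hqp]
        simp only [Finsupp.add_apply, h0, add_zero]
        have := hle q
        simp only [Nat.factorization_pow, Finsupp.smul_apply, smul_eq_mul] at this
        omega
    have hlen : S * p ≤ n := by
      have h1 : 1 ≤ S * p := Nat.one_le_iff_ne_zero.2 hmul0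
      calc S * p ≤ (S * p) ^ 2 := by nlinarith
        _ ≤ n := Nat.le_of_dvd hn hdvd2
    have hcontra : S * p ≤ S :=
      Nat.le_findGreatest (P := fun s => s ^ 2 ∣ n) hlen hdvd2
    have := hp.two_le
    nlinarith [chi_pos hn]
  · omega

lemma dvd_of_n_dvd_sq {n : ℕ} (hn : 0 < n) {k : ℕ} (hk : n ∣ k ^ 2) :
    n / chi n ∣ k := by
  rcases Nat.eq_zero_or_pos k with rfl | hk0
  · exact dvd_zero _
  set S := chi n with hS
  have hSdvd : S ∣ n := dvd_trans (dvd_pow_self S two_ne_zero) (chi_sq_dvd hn)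
  have hm0 : n / S ≠ 0 :=
    Nat.div_ne_zero_iff.2 ⟨(chi_pos hn).ne', Nat.le_of_dvd hn hSdvd⟩
  rw [← Nat.factorization_le_iff_dvd hm0 hk0.ne']
  intro p
  rw [Nat.factorization_div hSdvd]
  have hS' : S.factorization p = n.factorization p / 2 := chi_factorization hn p
  have hk2 : n.factorization p ≤ 2 * k.factorization p := by
    have := (Nat.factorization_le_iff_dvd hn.ne' (pow_ne_zero 2 hk0.ne')).2 hk p
    simpa [Nat.factorization_pow] using this
  simp only [Finsupp.tsub_apply, hS']
  omega

lemma n_dvd_sq_of_dvd {n : ℕ} (hn : 0 < n) {k : ℕ} (hk : n / chi n ∣ k) :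
    n ∣ k ^ 2 := by
  obtain ⟨c, hc⟩ := chi_sq_dvd hn
  set S := chi n with hS
  have hS0 : 0 < S := chi_pos hn
  have h1 : n / S = S * c := by
    rw [hc, pow_two, mul_assoc, Nat.mul_div_cancel_left _ hS0]
  have h2 : n ∣ (n / S) ^ 2 := ⟨c, by rw [h1, hc]; ring⟩
  exact dvd_trans h2 (pow_dvd_pow_of_dvd hk 2)

theorem stmt_0 (n : ℕ) (hn : 0 < n) :
    chi n = Nat.card {a : ZMod n | a ^ 2 = 0} := by
  haveI : NeZero n := ⟨hn.ne'⟩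
  set S := chi n with hS
  set m := n / S with hm
  have hSdvd : S ∣ n := dvd_trans (dvd_pow_self _ two_ne_zero) (chi_sq_dvd hn)
  have hSm : S * m = n := Nat.mul_div_cancel' hSdvd
  have hm0 : 0 < m := Nat.div_pos (Nat.le_of_dvd hn hSdvd) (chi_pos hn)
  rw [Nat.card_eq_fintype_card, Fintype.card_subtype]
  simp only [Set.mem_setOf_eq]
  have hcard : (Finset.univ.filter (fun a : ZMod n => a ^ 2 = 0)).card
      = ((Finset.range n).filter (fun k => m ∣ k)).card := by
    apply Finset.card_bij (fun a _ => ZMod.val a)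
    · intro a ha
      simp only [Finset.mem_filter, Finset.mem_univ, true_and] at ha
      simp only [Finset.mem_filter, Finset.mem_range]
      refine ⟨ZMod.val_lt a, ?_⟩
      apply dvd_of_n_dvd_sq hn
      have hcast : ((ZMod.val a ^ 2 : ℕ) : ZMod n) = 0 := by
        push_cast
        rw [ZMod.natCast_val, ZMod.cast_id]
        exact ha
      exact (ZMod.natCast_eq_zero_iff _ _).1 hcast
    · intro a _ b _ h
      exact ZMod.val_injective n h
    · intro k hk
      simp only [Finset.mem_filter, Finset.mem_range] at hk
      refine ⟨(k : ZMod n), ?_, ZMod.val_natCast_of_lt hk.1⟩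
      simp only [Finset.mem_filter, Finset.mem_univ, true_and]
      have : ((k ^ 2 : ℕ) : ZMod n) = 0 :=
        (ZMod.natCast_eq_zero_iff _ _).2 (n_dvd_sq_of_dvd hn hk.2)
      push_cast at this
      exact this
  rw [hcard]
  have himg : (Finset.range n).filter (fun k => m ∣ k)
      = (Finset.range S).image (fun j => j * m) := by
    ext k
    simp only [Finset.mem_filter, Finset.mem_range, Finset.mem_image]
    constructor
    · rintro ⟨hkn, j, rfl⟩
      exact ⟨j, by nlinarith, by ring⟩
    · rintro ⟨j, hj, rfl⟩
      exact ⟨by nlinarith, j, by ring⟩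
  rw [himg, Finset.card_image_of_injective _ (fun a b h =>
    Nat.eq_of_mul_eq_mul_right hm0 h), Finset.card_range]
end

section
/- For every positive integer n, the largest natural number s such that s² divides n is equal to the number of pairs (x, y) of natural numbers with 0 ≤ x ≤ n−1, 0 ≤ y ≤ n−1 and x² = n·y. -/
lemma one_le_chi {n : ℕ} (hn : 0 < n) : 1 ≤ chi n :=
  Nat.le_findGreatest hn (by simp)

lemma sq_lcm_dvd {n t s : ℕ} (hn : 0 < n) (ht : t ^ 2 ∣ n) (hs : s ^ 2 ∣ n) :
    (Nat.lcm t s) ^ 2 ∣ n := by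
  have ht0 : 0 < t := by
    rcases Nat.eq_zero_or_pos t with h | h
    · subst h; simp [pow_two] at ht; omega
    · exact h
  have hg : 0 < Nat.gcd t s := Nat.gcd_pos_of_pos_left s ht0
  have hcop := Nat.coprime_div_gcd_div_gcd hg
  have hdt := Nat.gcd_dvd_left t s
  have hds := Nat.gcd_dvd_right t s
  have hgl := Nat.gcd_mul_lcm t s
  obtain ⟨L, hLdef⟩ : ∃ L, Nat.lcm t s = L := ⟨_, rfl⟩
  obtain ⟨g, hG⟩ : ∃ g, Nat.gcd t s = g := ⟨_, rfl⟩
  rw [hG] at hg hcop hdt hds hgl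
  rw [hLdef] at hgl ⊢
  obtain ⟨a, hta⟩ := hdt
  obtain ⟨b, hsb⟩ := hds
  have ha' : t / g = a := by rw [hta, Nat.mul_div_cancel_left _ hg]
  have hb' : s / g = b := by rw [hsb, Nat.mul_div_cancel_left _ hg]
  rw [ha', hb'] at hcop
  have hlcm : L = g * (a * b) := by
    refine Nat.eq_of_mul_eq_mul_left hg ?_
    rw [hgl, hta, hsb]; ring
  obtain ⟨u, hu⟩ := ht
  have hn2 : n = g ^ 2 * (a ^ 2 * u) := by rw [hu, hta]; ring
  have hb2 : b ^ 2 ∣ a ^ 2 * u := by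
    have h3 : g ^ 2 * b ^ 2 ∣ g ^ 2 * (a ^ 2 * u) := by
      calc g ^ 2 * b ^ 2 = (g * b) ^ 2 := by ring
      _ = s ^ 2 := by rw [← hsb]
      _ ∣ n := hs
      _ = g ^ 2 * (a ^ 2 * u) := hn2
    exact (mul_dvd_mul_iff_left (by positivity : (g : ℕ) ^ 2 ≠ 0)).mp h3
  have hb2' : b ^ 2 ∣ u :=
    Nat.Coprime.dvd_of_dvd_mul_left (Nat.Coprime.pow 2 2 hcop.symm) hb2
  obtain ⟨v, hv⟩ := hb2'
  exact ⟨v, by rw [hn2, hv, hlcm]; ring⟩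

lemma dvd_chi {n t : ℕ} (hn : 0 < n) (ht : t ^ 2 ∣ n) : t ∣ chi n := by
  have hs := chi_sq_dvd hn
  have hl : (Nat.lcm t (chi n)) ^ 2 ∣ n := sq_lcm_dvd hn ht hs
  have hchipos : 0 < chi n := one_le_chi hn
  have ht0 : 0 < t := by
    rcases Nat.eq_zero_or_pos t with h | h
    · subst h; simp [pow_two] at ht; omega
    · exact h
  have hlpos : 0 < Nat.lcm t (chi n) :=
    Nat.pos_of_ne_zero (Nat.lcm_ne_zero (by omega) (by omega))
  have hle : Nat.lcm t (chi n) ≤ n :=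
    le_trans (Nat.le_self_pow (by norm_num) _) (Nat.le_of_dvd hn hl)
  have hles : Nat.lcm t (chi n) ≤ chi n := by
    by_contra hlt
    exact Nat.findGreatest_is_greatest (lt_of_not_ge hlt) hle hl
  have heq : Nat.lcm t (chi n) = chi n :=
    Nat.le_antisymm hles (Nat.le_of_dvd hlpos (Nat.dvd_lcm_right t _))
  exact heq ▸ Nat.dvd_lcm_left t (chi n)

lemma div_chi_dvd {n x : ℕ} (hn : 0 < n) (hx : n ∣ x ^ 2) : n / chi n ∣ x := by
  rcases Nat.eq_zero_or_pos x with rfl | hx0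
  · exact Dvd.intro 0 rfl
  have hchi : (chi n) ^ 2 ∣ n := chi_sq_dvd hn
  have hchipos : 0 < chi n := one_le_chi hn
  have hg : 0 < Nat.gcd x n := Nat.gcd_pos_of_pos_left n hx0
  have hcop := Nat.coprime_div_gcd_div_gcd hg
  have hdx := Nat.gcd_dvd_left x n
  have hdn := Nat.gcd_dvd_right x n
  obtain ⟨g, hG⟩ : ∃ g, Nat.gcd x n = g := ⟨_, rfl⟩
  rw [hG] at hg hcop hdx hdn
  obtain ⟨a, hxa⟩ := hdx
  obtain ⟨b, hnb⟩ := hdn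
  have ha' : x / g = a := by rw [hxa, Nat.mul_div_cancel_left _ hg]
  have hb' : n / g = b := by rw [hnb, Nat.mul_div_cancel_left _ hg]
  rw [ha', hb'] at hcop
  have hb0 : 0 < b := by
    rcases Nat.eq_zero_or_pos b with h | h
    · rw [h, mul_zero] at hnb; omega
    · exact h
  have hbg : b ∣ g := by
    have h1 : g * b ∣ g * (g * a ^ 2) := by
      calc g * b = n := hnb.symm
      _ ∣ x ^ 2 := hx
      _ = g * (g * a ^ 2) := by rw [hxa]; ring
    have h2 : b ∣ g * a ^ 2 := (mul_dvd_mul_iff_left (by omega : g ≠ 0)).mp h1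
    exact Nat.Coprime.dvd_of_dvd_mul_right (Nat.Coprime.pow_right 2 hcop.symm) h2
  have hbchi : b ∣ chi n := by
    refine dvd_chi hn ?_
    obtain ⟨w, hw⟩ := hbg
    exact ⟨w, by rw [hnb, hw]; ring⟩
  obtain ⟨e, he⟩ : chi n ∣ n := dvd_trans (Dvd.intro _ (sq (chi n)).symm) hchi
  obtain ⟨S, hS⟩ : ∃ S, chi n = S := ⟨_, rfl⟩
  rw [hS] at hbchi he hchipos ⊢
  obtain ⟨c, hc⟩ := hbchi
  have hgce : g = c * e := by
    refine Nat.eq_of_mul_eq_mul_left hb0 ?_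
    rw [mul_comm b g, ← hnb, he, hc]; ring
  have hdiv : n / S = e := Nat.div_eq_of_eq_mul_left hchipos (by rw [he]; ring)
  rw [hdiv, hxa, hgce]
  exact ⟨a * c, by ring⟩

theorem stmt_4 (n : ℕ) (hn : 0 < n) :
    chi n =
      ((Finset.range n ×ˢ Finset.range n).filter fun p => p.1 ^ 2 = n * p.2).card := by
  have hs1 : 1 ≤ chi n := one_le_chi hn
  have hsq : (chi n) ^ 2 ∣ n := chi_sq_dvd hn
  have hdc : ∀ x : ℕ, n ∣ x ^ 2 → n / chi n ∣ x := fun x => div_chi_dvd hn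
  obtain ⟨S, hS⟩ : ∃ S, chi n = S := ⟨_, rfl⟩
  rw [hS] at hs1 hsq hdc ⊢
  obtain ⟨m, hm⟩ := hsq
  have hm0 : 0 < m := by
    rcases Nat.eq_zero_or_pos m with h | h
    · rw [h, mul_zero] at hm; omega
    · exact h
  have hd0 : 0 < S * m := by positivity
  have hnd : n = S * (S * m) := by rw [hm]; ring
  have hnds : n / S = S * m := Nat.div_eq_of_eq_mul_left hs1 (by rw [hnd]; ring)
  have himg : ((Finset.range n ×ˢ Finset.range n).filter fun p => p.1 ^ 2 = n * p.2)
      = (Finset.range S).image (fun k => (k * (S * m), k ^ 2 * m)) := by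
    ext ⟨x, y⟩
    simp only [Finset.mem_filter, Finset.mem_product, Finset.mem_range, Finset.mem_image,
      Prod.mk.injEq]
    constructor
    · rintro ⟨⟨hx, hy⟩, hxy⟩
      have hndvd : n ∣ x ^ 2 := ⟨y, hxy⟩
      have hdx : S * m ∣ x := hnds ▸ hdc x hndvd
      obtain ⟨k, hk⟩ := hdx
      refine ⟨k, ?_, by rw [hk, mul_comm], ?_⟩
      · have h2 : k * (S * m) < S * (S * m) := by
          rw [mul_comm k (S * m), ← hk, ← hnd]; exact hx
        exact Nat.lt_of_mul_lt_mul_right h2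
      · have h3 : n * y = n * (k ^ 2 * m) := by rw [← hxy, hk, hm]; ring
        exact (Nat.eq_of_mul_eq_mul_left hn h3).symm
    · rintro ⟨k, hk, rfl, rfl⟩
      refine ⟨⟨?_, ?_⟩, by rw [hm]; ring⟩
      · rw [hnd]; exact (Nat.mul_lt_mul_right hd0).mpr hk
      · rw [hm]
        exact (Nat.mul_lt_mul_right hm0).mpr (Nat.pow_lt_pow_left hk (by norm_num))
  rw [himg, Finset.card_image_of_injective _ (fun a b hab => by
    have h := congrArg Prod.fst hab
    simpa [Nat.mul_left_inj (by omega : S * m ≠ 0)] using h),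
    Finset.card_range]
end

section
/- For every positive integer n, 2^(ω(n)+1) is equal to the number of pairs (x, y) of natural numbers with 0 ≤ x ≤ 4n−1, 0 ≤ y ≤ 4n−1 and x² = 4n·y + 1. -/
open Finset


lemma root_mem {m : ℕ} [NeZero m] (a : ZMod m) (ha : a ^ 2 = 1) :
    ((m : ℤ)) ∣ ((a.val : ℤ) - 1) * ((a.val : ℤ) + 1) := by
  rw [← ZMod.intCast_zmod_eq_zero_iff_dvd]
  push_cast
  rw [ZMod.natCast_val, ZMod.cast_id]
  ring_nf
  rw [ha]
  ring

lemma sq1_odd_prime_pow_aux {p k : ℕ} (hp : p.Prime) (hodd : p ≠ 2) (hk : 0 < k) [NeZero (p^k)] :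
    (Finset.univ.filter (fun a : ZMod (p^k) => a ^ 2 = 1)) = {1, -1} := by
  have hpi : Prime (p : ℤ) := Nat.prime_iff_prime_int.mp hp
  ext a
  simp only [mem_filter, mem_univ, true_and, mem_insert, mem_singleton]
  constructor
  · intro ha
    have hdvd : ((p : ℤ))^k ∣ ((a.val : ℤ) - 1) * ((a.val : ℤ) + 1) := by
      have := root_mem a ha
      rwa [Nat.cast_pow] at this
    by_cases hd : (p : ℤ) ∣ ((a.val : ℤ) + 1)
    · right
      have hnd : ¬ (p : ℤ) ∣ ((a.val : ℤ) - 1) := by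
        intro h
        have h2 : (p : ℤ) ∣ 2 := by
          have := dvd_sub hd h
          simpa using this
        rw [show ((2:ℤ)) = ((2:ℕ):ℤ) by norm_num, Int.natCast_dvd_natCast] at h2
        exact hodd ((Nat.prime_dvd_prime_iff_eq hp Nat.prime_two).mp h2)
      have hcop : IsCoprime ((p:ℤ)^k) ((a.val : ℤ) - 1) :=
        (hpi.coprime_iff_not_dvd.mpr hnd).pow_left
      have : ((p:ℤ))^k ∣ ((a.val : ℤ) + 1) := hcop.dvd_of_dvd_mul_left hdvd
      have h0 : ((((a.val : ℤ) + 1) : ℤ) : ZMod (p^k)) = 0 := by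
        rw [ZMod.intCast_zmod_eq_zero_iff_dvd]
        rwa [Nat.cast_pow]
      push_cast at h0
      rw [ZMod.natCast_val, ZMod.cast_id] at h0
      linear_combination h0
    · left
      have hcop : IsCoprime ((p:ℤ)^k) ((a.val : ℤ) + 1) :=
        (hpi.coprime_iff_not_dvd.mpr hd).pow_left
      have : ((p:ℤ))^k ∣ ((a.val : ℤ) - 1) := hcop.dvd_of_dvd_mul_right hdvd
      have h0 : ((((a.val : ℤ) - 1) : ℤ) : ZMod (p^k)) = 0 := by
        rw [ZMod.intCast_zmod_eq_zero_iff_dvd]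
        rwa [Nat.cast_pow]
      push_cast at h0
      rw [ZMod.natCast_val, ZMod.cast_id] at h0
      linear_combination h0
  · rintro (rfl | rfl) <;> ring

noncomputable def sq1 (m : ℕ) : ℕ := Nat.card {a : ZMod m // a ^ 2 = 1}

lemma sq1_eq_filter (m : ℕ) [NeZero m] :
    sq1 m = (Finset.univ.filter (fun a : ZMod m => a ^ 2 = 1)).card := by
  classical
  rw [sq1, Nat.card_eq_fintype_card, Fintype.card_subtype]

lemma sq1_mul {a b : ℕ} [NeZero a] [NeZero b] (h : Nat.Coprime a b) :
    sq1 (a * b) = sq1 a * sq1 b := by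
  classical
  have : {x : ZMod (a*b) // x ^ 2 = 1} ≃ {y : ZMod a × ZMod b // y ^ 2 = 1} := by
    refine Equiv.subtypeEquiv (ZMod.chineseRemainder h).toEquiv fun x => ?_
    simp only [RingEquiv.toEquiv_eq_coe, EquivLike.coe_coe]
    constructor
    · intro hx
      show (ZMod.chineseRemainder h) x ^ 2 = 1
      rw [← map_pow, hx, map_one]
    · intro hx
      have hx' : (ZMod.chineseRemainder h) (x ^ 2) = (ZMod.chineseRemainder h) 1 := by
        rw [map_pow, map_one]; exact hx
      exact (ZMod.chineseRemainder h).injective hx'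
  have h2 : {y : ZMod a × ZMod b // y ^ 2 = 1} ≃
      {u : ZMod a // u ^ 2 = 1} × {v : ZMod b // v ^ 2 = 1} := by
    refine ⟨fun y => ⟨⟨y.1.1, ?_⟩, ⟨y.1.2, ?_⟩⟩, fun p => ⟨(p.1.1, p.2.1), ?_⟩, ?_, ?_⟩
    · have := y.2; rw [Prod.ext_iff] at this; exact this.1
    · have := y.2; rw [Prod.ext_iff] at this; exact this.2
    · exact Prod.ext p.1.2 p.2.2
    · intro y; rfl
    · intro p; rfl
  rw [sq1, sq1, sq1, Nat.card_congr (this.trans h2), Nat.card_prod]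

lemma sq1_odd_prime_pow {p k : ℕ} (hp : p.Prime) (hodd : p ≠ 2) (hk : 0 < k) :
    sq1 (p ^ k) = 2 := by
  have hp3 : 3 ≤ p := by
    have := hp.two_le; omega
  have h2 : 2 < p ^ k := lt_of_lt_of_le (by omega) (Nat.le_self_pow hk.ne' p)
  have : NeZero (p ^ k) := ⟨by omega⟩
  have : Fact (2 < p ^ k) := ⟨h2⟩
  classical
  rw [sq1_eq_filter, sq1_odd_prime_pow_aux hp hodd hk, card_insert_of_notMem (by
    simp only [mem_singleton]
    exact fun h => ZMod.neg_one_ne_one h.symm), card_singleton]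


lemma two_pow_filter {k : ℕ} (hk : 3 ≤ k) [NeZero (2^k)] :
    (Finset.univ.filter (fun a : ZMod (2^k) => a ^ 2 = 1)) =
      {1, -1, (2 : ZMod (2^k))^(k-1) + 1, (2 : ZMod (2^k))^(k-1) - 1} := by
  have h2 : Prime (2 : ℤ) := Int.prime_two
  have hck : (2 : ZMod (2^k))^k = 0 := by
    have : ((2^k : ℕ) : ZMod (2^k)) = 0 := ZMod.natCast_self _
    push_cast at this
    exact this
  have hc2 : (2 : ZMod (2^k)) * (2 : ZMod (2^k))^(k-1) = 0 := by
    rw [← pow_succ']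
    have h : k - 1 + 1 = k := by omega
    rw [h, hck]
  have hcsq : ((2 : ZMod (2^k))^(k-1))^2 = 0 := by
    rw [← pow_mul]
    have h : (k-1) * 2 = k + (k - 2) := by omega
    rw [h, pow_add, hck, zero_mul]
  ext a
  simp only [mem_filter, mem_univ, true_and, mem_insert, mem_singleton]
  constructor
  · intro ha
    obtain ⟨x, hax, hdvd⟩ : ∃ x : ℤ, ((x : ℤ) : ZMod (2^k)) = a ∧
        (2:ℤ)^k ∣ (x - 1) * (x + 1) := by
      refine ⟨(a.val : ℤ), ?_, ?_⟩
      · push_cast; rw [ZMod.natCast_val, ZMod.cast_id]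
      · have := root_mem a ha
        push_cast at this
        exact this
    have hodd : Odd x := by
      rcases Int.even_or_odd x with ⟨t, rfl⟩ | ho
      · exfalso
        have hd2 : (2:ℤ) ∣ (t+t-1) * (t+t+1) := dvd_trans (dvd_pow_self 2 (by omega)) hdvd
        have he : (t+t-1) * (t+t+1) = 4*t^2 - 1 := by ring
        rw [he] at hd2
        have h4 : (2:ℤ) ∣ 4*t^2 := ⟨2*t^2, by ring⟩
        have : (2:ℤ) ∣ 1 := by
          have := dvd_sub h4 hd2
          simpa using this
        norm_num at this
      · exact ho
    obtain ⟨t, rfl⟩ := hodd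
    have hfac : (2*t+1 - 1) * (2*t+1 + 1) = 4 * (t * (t+1)) := by ring
    rw [hfac] at hdvd
    have hk4 : (2:ℤ)^k = 4 * 2^(k-2) := by
      have h : k = 2 + (k - 2) := by omega
      rw [h, pow_add]; norm_num
    rw [hk4] at hdvd
    have hdvd2 : (2:ℤ)^(k-2) ∣ t * (t+1) := by
      rcases hdvd with ⟨w, hw⟩
      exact ⟨w, by linarith⟩
    have hcast : ∀ s : ℤ, ((2^(k-1) * s : ℤ) : ZMod (2^k)) =
        (2 : ZMod (2^k))^(k-1) * ((s : ℤ) : ZMod (2^k)) := by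
      intro s; push_cast; ring
    by_cases hd : (2:ℤ) ∣ (t+1)
    · have hnd : ¬ (2:ℤ) ∣ t := by
        intro h; obtain ⟨u, rfl⟩ := h; obtain ⟨v, hv⟩ := hd; omega
      have hcop : IsCoprime ((2:ℤ)^(k-2)) t := (h2.coprime_iff_not_dvd.mpr hnd).pow_left
      obtain ⟨s, hs⟩ := hcop.dvd_of_dvd_mul_left hdvd2
      have key : a + 1 = (2 : ZMod (2^k))^(k-1) * ((s : ℤ) : ZMod (2^k)) := by
        push_cast at hax
        have h1 : ((2*(t+1) : ℤ) : ZMod (2^k)) = a + 1 := by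
          push_cast; linear_combination hax
        have h2' : (2:ℤ)*(t+1) = 2^(k-1) * s := by
          rw [hs, ← mul_assoc, ← pow_succ']
          congr 2
          omega
        rw [← h1, h2', hcast]
      rcases Int.even_or_odd s with ⟨u, rfl⟩ | ⟨u, rfl⟩
      · right; left
        have h0 : a + 1 = 0 := by
          rw [key]; push_cast
          rw [show ((u:ZMod (2^k)) + u) = 2 * u by ring]
          rw [show (2 : ZMod (2^k))^(k-1) * (2 * u) = (2 * (2:ZMod (2^k))^(k-1)) * u by ring]
          rw [hc2, zero_mul]
        linear_combination h0
      · right; right; right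
        have h0 : a + 1 = (2:ZMod (2^k))^(k-1) := by
          rw [key]; push_cast
          have h3 : (2 : ZMod (2^k))^(k-1) * (2*u+1) = (2 * (2:ZMod (2^k))^(k-1)) * u
              + (2:ZMod (2^k))^(k-1) := by ring
          rw [h3, hc2, zero_mul, zero_add]
        linear_combination h0
    · have hcop : IsCoprime ((2:ℤ)^(k-2)) (t+1) := (h2.coprime_iff_not_dvd.mpr hd).pow_left
      obtain ⟨s, hs⟩ := hcop.dvd_of_dvd_mul_right hdvd2
      have key : a - 1 = (2 : ZMod (2^k))^(k-1) * ((s : ℤ) : ZMod (2^k)) := by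
        push_cast at hax
        have h1 : ((2*t : ℤ) : ZMod (2^k)) = a - 1 := by
          push_cast; linear_combination hax
        have h2' : (2:ℤ)*t = 2^(k-1) * s := by
          rw [hs, ← mul_assoc, ← pow_succ']
          congr 2
          omega
        rw [← h1, h2', hcast]
      rcases Int.even_or_odd s with ⟨u, rfl⟩ | ⟨u, rfl⟩
      · left
        have h0 : a - 1 = 0 := by
          rw [key]; push_cast
          rw [show ((u:ZMod (2^k)) + u) = 2 * u by ring]
          rw [show (2 : ZMod (2^k))^(k-1) * (2 * u) = (2 * (2:ZMod (2^k))^(k-1)) * u by ring]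
          rw [hc2, zero_mul]
        linear_combination h0
      · right; right; left
        have h0 : a - 1 = (2:ZMod (2^k))^(k-1) := by
          rw [key]; push_cast
          have h3 : (2 : ZMod (2^k))^(k-1) * (2*u+1) = (2 * (2:ZMod (2^k))^(k-1)) * u
              + (2:ZMod (2^k))^(k-1) := by ring
          rw [h3, hc2, zero_mul, zero_add]
        linear_combination h0
  · rintro (rfl | rfl | rfl | rfl)
    · ring
    · ring
    · linear_combination hcsq + hc2
    · linear_combination hcsq - hc2

lemma card_four {k : ℕ} (hk : 3 ≤ k) [NeZero (2^k)] :
    ({1, -1, (2 : ZMod (2^k))^(k-1) + 1, (2 : ZMod (2^k))^(k-1) - 1} :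
      Finset (ZMod (2^k))).card = 4 := by
  set c : ZMod (2^k) := (2 : ZMod (2^k))^(k-1) with hcdef
  have hfact : Fact (2 < 2^k) := ⟨by
    calc 2 < 2^3 := by norm_num
    _ ≤ 2^k := Nat.pow_le_pow_right (by norm_num) hk⟩
  have hne : (-1 : ZMod (2^k)) ≠ 1 := ZMod.neg_one_ne_one
  have h20 : (2 : ZMod (2^k)) ≠ 0 := by
    intro h
    apply hne
    linear_combination -h
  have hc0 : c ≠ 0 := by
    intro h
    rw [hcdef] at h
    have h' : ((2^(k-1) : ℕ) : ZMod (2^k)) = 0 := by push_cast; exact h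
    rw [ZMod.natCast_eq_zero_iff] at h'
    have hle := Nat.le_of_dvd (by positivity) h'
    have hlt : 2^(k-1) < 2^k := Nat.pow_lt_pow_right (by norm_num) (by omega)
    omega
  have key : ∀ d : ℤ, ¬ (2:ℤ) ∣ d → c ≠ ((2 * d : ℤ) : ZMod (2^k)) := by
    intro d hd h
    have h' : ((2^(k-1) - 2*d : ℤ) : ZMod (2^k)) = 0 := by
      push_cast
      rw [hcdef] at h
      push_cast at h
      linear_combination h
    rw [ZMod.intCast_zmod_eq_zero_iff_dvd] at h'
    push_cast at h'
    have h2k : (2:ℤ)^k = 2 * 2^(k-1) := by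
      rw [← pow_succ']; congr 1; omega
    have hfac : (2:ℤ)^(k-1) - 2*d = 2 * (2^(k-2) - d) := by
      have : (2:ℤ)^(k-1) = 2 * 2^(k-2) := by rw [← pow_succ']; congr 1; omega
      rw [this]; ring
    rw [h2k, hfac] at h'
    have h'' : (2:ℤ)^(k-1) ∣ 2^(k-2) - d := (mul_dvd_mul_iff_left (by norm_num : (2:ℤ) ≠ 0)).mp h'
    have h2d : (2:ℤ) ∣ 2^(k-2) - d := dvd_trans (dvd_pow_self 2 (by omega)) h''
    have h2p : (2:ℤ) ∣ 2^(k-2) := dvd_pow_self 2 (by omega)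
    exact hd (by omega)
  have hc2 : c ≠ 2 := by
    have := key 1 (by norm_num)
    simpa using this
  have hcn2 : c ≠ -2 := by
    have := key (-1) (by norm_num)
    simpa using this
  rw [card_insert_of_notMem, card_insert_of_notMem, card_insert_of_notMem, card_singleton]
  · simp only [mem_singleton]
    intro h
    exact h20 (by linear_combination h)
  · simp only [mem_insert, mem_singleton]
    push_neg
    constructor
    · intro h; exact hcn2 (by linear_combination -h)
    · intro h; exact hc0 (by linear_combination -h)
  · simp only [mem_insert, mem_singleton]
    push_neg
    refine ⟨fun h => hne (h.symm), fun h => hc0 (by linear_combination -h),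
      fun h => hc2 (by linear_combination -h)⟩

lemma sq1_four : sq1 4 = 2 := by
  rw [sq1_eq_filter]; decide

lemma sq1_two_pow {k : ℕ} (hk : 3 ≤ k) : sq1 (2 ^ k) = 4 := by
  haveI : NeZero (2^k) := ⟨by positivity⟩
  rw [sq1_eq_filter, two_pow_filter hk, card_four hk]

lemma sq1_odd (m : ℕ) (hodd : Odd m) (hm : 0 < m) :
    sq1 m = 2 ^ m.primeFactors.card := by
  induction m using Nat.recOnPosPrimePosCoprime with
  | prime_pow p k hp hk =>
    have hp2 : p ≠ 2 := by
      rintro rfl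
      exact (Nat.not_odd_iff_even.mpr (Nat.even_pow.mpr ⟨even_two, hk.ne'⟩)) hodd
    rw [sq1_odd_prime_pow hp hp2 hk,
      Nat.primeFactors_prime_pow hk.ne' hp, card_singleton, pow_one]
  | zero => omega
  | one =>
    haveI : Unique {a : ZMod 1 // a ^ 2 = 1} :=
      ⟨⟨⟨0, Subsingleton.elim _ _⟩⟩, fun x => Subtype.ext (Subsingleton.elim _ _)⟩
    rw [sq1, Nat.card_unique, Nat.primeFactors_one, card_empty, pow_zero]
  | coprime a b ha hb hab iha ihb =>
    rw [Nat.odd_mul] at hodd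
    have : NeZero a := ⟨by omega⟩
    have : NeZero b := ⟨by omega⟩
    rw [sq1_mul hab, iha hodd.1 (by omega), ihb hodd.2 (by omega),
      hab.primeFactors_mul, card_union_of_disjoint hab.disjoint_primeFactors, pow_add]

lemma count_pairs (n : ℕ) (hn : 0 < n) [NeZero (4*n)] :
    ((Finset.range (4 * n) ×ˢ Finset.range (4 * n)).filter
      fun p => p.1 ^ 2 = 4 * n * p.2 + 1).card
    = (Finset.univ.filter (fun a : ZMod (4*n) => a ^ 2 = 1)).card := by
  have h1n : 1 < 4 * n := by omega
  apply Finset.card_bij (fun p _ => ((p.1 : ℕ) : ZMod (4*n)))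
  · intro p hp
    simp only [mem_filter, mem_product, mem_range] at hp
    simp only [mem_filter, mem_univ, true_and]
    have h : ((p.1 ^ 2 : ℕ) : ZMod (4*n)) = ((4 * n * p.2 + 1 : ℕ) : ZMod (4*n)) := by
      rw [hp.2]
    push_cast at h
    have h0 : (4 : ZMod (4*n)) * (n : ZMod (4*n)) = 0 := by
      have := ZMod.natCast_self (4*n)
      push_cast at this
      exact this
    rw [h]; linear_combination (p.2 : ZMod (4*n)) * h0
  · intro p hp q hq h
    simp only [mem_filter, mem_product, mem_range] at hp hq
    have h1 : p.1 = q.1 := by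
      have := ZMod.val_cast_of_lt hp.1.1
      have := ZMod.val_cast_of_lt hq.1.1
      rw [h] at *
      omega
    have h2 : p.2 = q.2 := by
      have e1 := hp.2
      have e2 := hq.2
      rw [h1] at e1
      have : 4 * n * p.2 = 4 * n * q.2 := by omega
      exact Nat.eq_of_mul_eq_mul_left (by omega) this
    exact Prod.ext h1 h2
  · intro a ha
    simp only [mem_filter, mem_univ, true_and] at ha
    have hval : a.val < 4 * n := ZMod.val_lt a
    haveI : Fact (1 < 4*n) := ⟨h1n⟩
    have hane : a ≠ 0 := by
      intro h; rw [h, zero_pow two_ne_zero] at ha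
      exact zero_ne_one ha
    have hv1 : 1 ≤ a.val :=
      Nat.one_le_iff_ne_zero.mpr (fun h => hane ((ZMod.val_eq_zero _).mp h))
    have hmod : a.val ^ 2 ≡ 1 [MOD 4*n] := by
      rw [← ZMod.natCast_eq_natCast_iff]
      push_cast
      rw [ZMod.natCast_val, ZMod.cast_id, ha]
    have hdvd : 4 * n ∣ a.val ^ 2 - 1 := (Nat.modEq_iff_dvd' (by nlinarith)).mp hmod.symm
    obtain ⟨y, hy⟩ := hdvd
    have hy' : a.val ^ 2 = 4 * n * y + 1 := by
      have : 1 ≤ a.val ^ 2 := by nlinarith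
      omega
    have hylt : y < 4 * n := by nlinarith
    refine ⟨(a.val, y), ?_, ?_⟩
    · simp only [mem_filter, mem_product, mem_range]
      exact ⟨⟨hval, hylt⟩, hy'⟩
    · simp only
      rw [ZMod.natCast_val, ZMod.cast_id]

theorem stmt_5 (n : ℕ) (hn : 0 < n) :
    2 ^ (n.primeFactors.card + 1) =
      ((Finset.range (4 * n) ×ˢ Finset.range (4 * n)).filter
        fun p => p.1 ^ 2 = 4 * n * p.2 + 1).card := by
  haveI : NeZero (4 * n) := ⟨by omega⟩
  rw [count_pairs n hn, ← sq1_eq_filter]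
  set a := n.factorization 2 with hadef
  set m := n / 2 ^ a with hmdef
  have hsplit : 2 ^ a * m = n := Nat.ordProj_mul_ordCompl_eq_self n 2
  have hmpos : 0 < m := Nat.ordCompl_pos 2 hn.ne'
  have hmodd : Odd m := Nat.odd_iff.mpr (Nat.two_dvd_ne_zero.mp
    (Nat.not_dvd_ordCompl Nat.prime_two hn.ne'))
  have hcop : Nat.Coprime (2 ^ (a + 2)) m :=
    Nat.Coprime.pow_left _ (Nat.coprime_ordCompl Nat.prime_two hn.ne')
  have h4n : 4 * n = 2 ^ (a + 2) * m := by
    rw [← hsplit]; ring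
  haveI : NeZero (2 ^ (a+2)) := ⟨by positivity⟩
  haveI : NeZero m := ⟨hmpos.ne'⟩
  rw [h4n, sq1_mul hcop, sq1_odd m hmodd hmpos]
  rcases Nat.eq_zero_or_pos a with ha | ha
  · -- n odd
    have hnm : n = m := by rw [← hsplit, ha]; ring
    rw [ha, show (2:ℕ) ^ (0 + 2) = 4 from rfl, sq1_four, ← hnm, pow_succ, mul_comm]
  · have hk3 : 3 ≤ a + 2 := by omega
    rw [sq1_two_pow hk3]
    have hfac : n.primeFactors = {2} ∪ m.primeFactors := by
      rw [← hsplit, Nat.Coprime.primeFactors_mul (Nat.Coprime.pow_left _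
        (Nat.coprime_ordCompl Nat.prime_two hn.ne')),
        Nat.primeFactors_prime_pow ha.ne' Nat.prime_two]
    have h2nm : 2 ∉ m.primeFactors := by
      intro h
      exact (Nat.not_dvd_ordCompl Nat.prime_two hn.ne') (Nat.dvd_of_mem_primeFactors h)
    rw [hfac, card_union_of_disjoint (by simpa using h2nm), card_singleton]
    ring
end

section
/- For all integers m ≥ 1 and x ≥ 1, one has x^m equal to the remainder of 2^(3·m²·x) upon division by 2^(3·m·x) − x; that is, x^m = 2^(3m²x) mod (2^(3mx) − x). -/
theorem stmt_9 (m x : ℕ) (hm : 1 ≤ m) (hx : 1 ≤ x) :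
    x ^ m = 2 ^ (3 * m ^ 2 * x) % (2 ^ (3 * m * x) - x) := by
  set N := 2 ^ (3 * m * x) - x with hN
  -- basic power facts
  have hxlt : x < 2 ^ x := Nat.lt_two_pow_self (n := x)
  have hxle2 : x < 2 ^ (3 * m * x) := by
    calc x < 2 ^ x := hxlt
    _ ≤ 2 ^ (3 * m * x) := Nat.pow_le_pow_right (by norm_num) (by nlinarith)
  -- x^m < N
  have hpow : x ^ m < 2 ^ (x * m) := by
    calc x ^ m < (2 ^ x) ^ m := Nat.pow_lt_pow_left hxlt (by omega)
    _ = 2 ^ (x * m) := by rw [← pow_mul]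
  have hsum : x ^ m + x < 2 ^ (3 * m * x) := by
    have hc : x * m = m * x := mul_comm x m
    have hp : 1 ≤ m * x := Nat.mul_pos hm hx
    have ha : 3 * m * x = 3 * (m * x) := by ring
    have hxm : x ≤ m * x := Nat.le_mul_of_pos_left x hm
    have h1 : 2 ^ (x * m) ≤ 2 ^ (3 * m * x - 1) :=
      Nat.pow_le_pow_right (by norm_num) (by omega)
    have h2 : 2 ^ x ≤ 2 ^ (3 * m * x - 1) :=
      Nat.pow_le_pow_right (by norm_num) (by omega)
    have h3 : 2 ^ (3 * m * x - 1) + 2 ^ (3 * m * x - 1) = 2 ^ (3 * m * x) := by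
      rw [← two_mul, ← pow_succ']
      congr 1
      omega
    omega
  have hlt : x ^ m < N := by omega
  -- congruence
  have hmod : x ≡ 2 ^ (3 * m * x) [MOD N] :=
    (Nat.modEq_iff_dvd' (le_of_lt hxle2)).mpr dvd_rfl
  have hmodm : x ^ m ≡ 2 ^ (3 * m ^ 2 * x) [MOD N] := by
    have : 3 * m ^ 2 * x = (3 * m * x) * m := by ring
    rw [this, pow_mul]
    exact hmod.pow m
  calc x ^ m = x ^ m % N := (Nat.mod_eq_of_lt hlt).symm
  _ = 2 ^ (3 * m ^ 2 * x) % N := hmodm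
end

section
/- Let n > 1 be a composite natural number and let D be the smallest divisor of n that is greater than 1. Then the number of 6-tuples (a, b, c, d, e, f) of natural numbers satisfying the system (a+b+2)·c = n, d·(a+b+1)! + 1 = e·n, and d + f = n is exactly D − 1. -/
theorem stmt_10 (n : ℕ) (hn : 1 < n) (hcomp : ¬ n.Prime) (D : ℕ)
    (hD1 : 1 < D) (hDn : D ∣ n) (hDmin : ∀ d, 1 < d → d ∣ n → D ≤ d) :
    Nat.card {t : ℕ × ℕ × ℕ × ℕ × ℕ × ℕ |
      (t.1 + t.2.1 + 2) * t.2.2.1 = n ∧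
      t.2.2.2.1 * Nat.factorial (t.1 + t.2.1 + 1) + 1 = t.2.2.2.2.1 * n ∧
      t.2.2.2.1 + t.2.2.2.2.2 = n} = D - 1 := by
  haveI : NeZero n := ⟨by omega⟩
  -- coprimality of (D-1)! with n
  have hcop : Nat.Coprime ((D-1).factorial) n := by
    by_contra h
    set g := Nat.gcd ((D-1).factorial) n with hg
    have hgpos : 0 < g := Nat.gcd_pos_of_pos_left _ (Nat.factorial_pos _)
    have hg1 : g ≠ 1 := h
    have hp : g.minFac.Prime := Nat.minFac_prime hg1
    have hpg : g.minFac ∣ g := Nat.minFac_dvd g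
    have hpn : g.minFac ∣ n := hpg.trans (Nat.gcd_dvd_right _ _)
    have hpf : g.minFac ∣ (D-1).factorial := hpg.trans (Nat.gcd_dvd_left _ _)
    have h1 := hDmin _ hp.one_lt hpn
    have h2 : g.minFac ≤ D - 1 := (Nat.Prime.dvd_factorial hp).mp hpf
    omega
  have hu : IsUnit (((D-1).factorial : ZMod n)) :=
    (ZMod.isUnit_iff_coprime _ _).mpr hcop
  set u : ZMod n := ((D-1).factorial : ZMod n) with hu_def
  set x : ZMod n := -u⁻¹ with hx
  set d0 : ℕ := x.val with hd0
  have hd0lt : d0 < n := ZMod.val_lt x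
  have hd0cast : (d0 : ZMod n) = x := by
    rw [hd0, ZMod.natCast_val, ZMod.cast_id]
  have hkey : ((d0 * (D-1).factorial + 1 : ℕ) : ZMod n) = 0 := by
    push_cast
    rw [hd0cast, hx, neg_mul, ZMod.inv_mul_of_unit _ hu]
    ring
  have hdvd : n ∣ d0 * (D-1).factorial + 1 := by
    rwa [ZMod.natCast_eq_zero_iff] at hkey
  set e0 : ℕ := (d0 * (D-1).factorial + 1) / n with he0def
  have he0 : e0 * n = d0 * (D-1).factorial + 1 := Nat.div_mul_cancel hdvd
  have hset : {t : ℕ × ℕ × ℕ × ℕ × ℕ × ℕ |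
      (t.1 + t.2.1 + 2) * t.2.2.1 = n ∧
      t.2.2.2.1 * Nat.factorial (t.1 + t.2.1 + 1) + 1 = t.2.2.2.2.1 * n ∧
      t.2.2.2.1 + t.2.2.2.2.2 = n} =
      (fun a => (a, D - 2 - a, n / D, d0, e0, n - d0)) '' Set.Iio (D - 1) := by
    ext ⟨a, b, c, d, e, f⟩
    simp only [Set.mem_setOf_eq, Set.mem_image, Set.mem_Iio, Prod.mk.injEq]
    constructor
    · rintro ⟨h1, h2, h3⟩
      have hdvd2 : (a + b + 2) ∣ n := ⟨c, h1.symm⟩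
      have hDle : D ≤ a + b + 2 := hDmin _ (by omega) hdvd2
      have hlt : a + b + 1 < D := by
        by_contra hle
        push_neg at hle
        have hDf : D ∣ (a+b+1).factorial := Nat.dvd_factorial (by omega) hle
        have h4 : D ∣ d * (a+b+1).factorial := hDf.mul_left d
        have h5 : D ∣ e * n := hDn.mul_left e
        have h6 : D ∣ 1 := by
          have : e * n - d * (a+b+1).factorial = 1 := by omega
          rw [← this]; exact Nat.dvd_sub h5 h4
        have := Nat.le_of_dvd one_pos h6
        omega
      have hDeq : a + b + 2 = D := by omega
      have hab1 : a + b + 1 = D - 1 := by omega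
      -- c
      have hc : c = n / D := by
        rw [← h1, hDeq, Nat.mul_div_cancel_left _ (by omega : 0 < D)]
      -- d < n
      have hdlt : d < n := by
        rcases Nat.lt_or_ge d n with h | h
        · exact h
        · exfalso
          have hdn : d = n := by omega
          have : n ∣ 1 := by
            have h7 : n ∣ d * (a+b+1).factorial := by rw [hdn]; exact Dvd.dvd.mul_right dvd_rfl _
            have h8 : n ∣ e * n := Dvd.dvd.mul_left dvd_rfl e
            have h9 : e * n - d * (a+b+1).factorial = 1 := by omega
            rw [← h9]; exact Nat.dvd_sub h8 h7
          have := Nat.le_of_dvd one_pos this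
          omega
      -- d = d0
      have hcast : ((d : ZMod n)) * u + 1 = 0 := by
        have := congrArg (fun m : ℕ => (m : ZMod n)) h2
        push_cast at this
        rw [hab1] at this
        rw [hu_def]
        rw [this, ZMod.natCast_self, mul_zero]
      have hdz : (d : ZMod n) = x := by
        have h10 : (d : ZMod n) * u = -1 := by linear_combination hcast
        have : (d : ZMod n) * u * u⁻¹ = -1 * u⁻¹ := by rw [h10]
        rwa [mul_assoc, ZMod.mul_inv_of_unit _ hu, mul_one, neg_one_mul, ← hx] at this
      have hd : d = d0 := by
        have h11 : ((d : ZMod n)).val = d := ZMod.val_cast_of_lt hdlt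
        rw [← h11, hdz, hd0]
      -- e
      have he : e = e0 := by
        have : e * n = e0 * n := by rw [he0, ← hab1, ← hd, h2]
        exact Nat.eq_of_mul_eq_mul_right (by omega) this
      exact ⟨a, by omega, rfl, by omega, hc.symm, hd.symm, he.symm, by omega⟩
    · rintro ⟨a', ha', rfl, rfl, rfl, rfl, rfl, rfl⟩
      have hab : a' + (D - 2 - a') + 2 = D := by omega
      refine ⟨?_, ?_, by omega⟩
      · rw [hab]; exact Nat.mul_div_cancel' hDn
      · rw [show a' + (D - 2 - a') + 1 = D - 1 by omega]
        rw [← he0]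
  rw [hset]
  rw [Nat.card_image_of_injOn (by intro x _ y _ h; exact (Prod.mk.injEq _ _ _ _).mp h |>.1)]
  simp [Nat.card_Iio]
end

section
/- Let n be a prime number. Then the number of 6-tuples (a, b, c, d, e, f) of natural numbers satisfying the system (a+b+2)·c = n, d·(a+b+1)! + 1 = e·n, and d + f = n is exactly n − 1. -/
theorem stmt_11 (n : ℕ) (hn : n.Prime) :
    Nat.card {t : ℕ × ℕ × ℕ × ℕ × ℕ × ℕ |
      (t.1 + t.2.1 + 2) * t.2.2.1 = n ∧
      t.2.2.2.1 * Nat.factorial (t.1 + t.2.1 + 1) + 1 = t.2.2.2.2.1 * n ∧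
      t.2.2.2.1 + t.2.2.2.2.2 = n} = n - 1 := by
  have hn2 : 2 ≤ n := hn.two_le
  haveI : Fact n.Prime := ⟨hn⟩
  have hwilson : n ∣ Nat.factorial (n - 1) + 1 := by
    have hw := ZMod.wilsons_lemma (p := n)
    have h0 : ((Nat.factorial (n - 1) + 1 : ℕ) : ZMod n) = 0 := by
      push_cast [hw]; ring
    exact (ZMod.natCast_eq_zero_iff _ _).mp h0
  set e0 := (Nat.factorial (n - 1) + 1) / n with he0def
  have he0 : e0 * n = Nat.factorial (n - 1) + 1 := Nat.div_mul_cancel hwilson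
  have hset : {t : ℕ × ℕ × ℕ × ℕ × ℕ × ℕ |
      (t.1 + t.2.1 + 2) * t.2.2.1 = n ∧
      t.2.2.2.1 * Nat.factorial (t.1 + t.2.1 + 1) + 1 = t.2.2.2.2.1 * n ∧
      t.2.2.2.1 + t.2.2.2.2.2 = n} =
      (fun a => (a, n - 2 - a, 1, 1, e0, n - 1)) '' Set.Iio (n - 1) := by
    ext ⟨a, b, c, d, e, f⟩
    simp only [Set.mem_setOf_eq, Set.mem_image, Set.mem_Iio, Prod.mk.injEq]
    constructor
    · rintro ⟨h1, h2, h3⟩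
      have hc : c ∣ n := ⟨a + b + 2, by linarith [h1, mul_comm (a + b + 2) c]⟩
      have hc1 : c = 1 := by
        rcases (hn.eq_one_or_self_of_dvd c hc) with h | h
        · exact h
        · exfalso
          rw [h] at h1
          have := Nat.eq_of_mul_eq_mul_right (by omega : 0 < n)
            (h1.trans (one_mul n).symm)
          omega
      have hab : a + b + 2 = n := by rw [hc1, mul_one] at h1; exact h1
      have hab1 : a + b + 1 = n - 1 := by omega
      rw [hab1] at h2
      -- d ≡ 1 mod n
      have hd1 : d % n = 1 := by
        have hcast : ((d : ZMod n)) = 1 := by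
          have : ((d * Nat.factorial (n - 1) + 1 : ℕ) : ZMod n) = ((e * n : ℕ) : ZMod n) := by
            rw [h2]
          push_cast [ZMod.wilsons_lemma (p := n), ZMod.natCast_self] at this
          have h2' : -(d : ZMod n) = -1 := by linear_combination this
          linear_combination -h2'
        have hmod : d % n = 1 % n :=
          (ZMod.natCast_eq_natCast_iff d 1 n).mp (by simpa using hcast)
        rw [Nat.mod_eq_of_lt hn2] at hmod
        exact hmod
      have hd : d = 1 := by
        rcases lt_or_eq_of_le (show d ≤ n by omega) with h | h
        · rw [Nat.mod_eq_of_lt h] at hd1; exact hd1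
        · subst h; simp at hd1
      rw [hd] at h2 h3
      have he : e = e0 := by
        apply Nat.eq_of_mul_eq_mul_right (show 0 < n by omega)
        rw [he0]; omega
      exact ⟨a, by omega, rfl, by omega, hc1.symm, hd.symm, he.symm, by omega⟩
    · rintro ⟨x, hx, h⟩
      obtain ⟨rfl, rfl, rfl, rfl, rfl, rfl⟩ := h
      refine ⟨by omega, ?_, by omega⟩
      have hx1 : x + (n - 2 - x) + 1 = n - 1 := by omega
      rw [hx1, one_mul, he0]
  rw [hset, Nat.card_image_of_injective (fun x y h => (Prod.mk.injEq _ _ _ _ ▸ h).1)]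
  rw [Nat.card_coe_set_eq, ← Finset.coe_Iio, Set.ncard_coe_finset, Nat.card_Iio]
end

section
/- Let n ≥ 2 be a natural number and let P be the greatest prime divisor of n. Then the number of 5-tuples (a, b, c, d, e) of natural numbers satisfying the system (a+b+2)·c = n, (a+b+1)! + 1 = d·(a+b+2), and ((a+b+2)!)^n = n·e is exactly P − 1. -/
theorem stmt_12 (n : ℕ) (hn : 2 ≤ n) (P : ℕ) (hP : P.Prime) (hPn : P ∣ n)
    (hPmax : ∀ q, q.Prime → q ∣ n → q ≤ P) :
    Nat.card {t : ℕ × ℕ × ℕ × ℕ × ℕ |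
      (t.1 + t.2.1 + 2) * t.2.2.1 = n ∧
      Nat.factorial (t.1 + t.2.1 + 1) + 1 = t.2.2.2.1 * (t.1 + t.2.1 + 2) ∧
      (Nat.factorial (t.1 + t.2.1 + 2)) ^ n = n * t.2.2.2.2} = P - 1 := by
  have hn0 : n ≠ 0 := by omega
  have hP2 : 2 ≤ P := hP.two_le
  haveI : Fact P.Prime := ⟨hP⟩
  -- Wilson's theorem: P ∣ (P-1)! + 1
  have hwilson : P ∣ Nat.factorial (P - 1) + 1 := by
    have h := ZMod.wilsons_lemma (p := P)
    have : ((Nat.factorial (P - 1) + 1 : ℕ) : ZMod P) = 0 := by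
      push_cast
      rw [h]; ring
    exact (ZMod.natCast_eq_zero_iff _ _).mp this
  -- n divides (P!)^n
  have hdvd : n ∣ (Nat.factorial P) ^ n := by
    have hfac0 : (Nat.factorial P) ^ n ≠ 0 := by positivity
    rw [← Nat.factorization_le_iff_dvd hn0 hfac0]
    intro p
    rcases eq_or_ne (n.factorization p) 0 with h0 | h0
    · simp [h0]
    · have hmem : p ∈ n.primeFactors := by
        rw [← Nat.support_factorization]; exact Finsupp.mem_support_iff.mpr h0
      have hp : p.Prime := Nat.prime_of_mem_primeFactors hmem
      have hpn : p ∣ n := Nat.dvd_of_mem_primeFactors hmem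
      have hpP : p ≤ P := hPmax p hp hpn
      have h1 : 1 ≤ (Nat.factorial P).factorization p := by
        have : p ∣ Nat.factorial P := Nat.dvd_factorial hp.pos hpP
        exact (Nat.Prime.factorization_pos_of_dvd hp (Nat.factorial_ne_zero P) this)
      have h2 : n.factorization p < n := Nat.factorization_lt p hn0
      rw [Nat.factorization_pow]
      calc n.factorization p ≤ n := h2.le
        _ = n * 1 := (mul_one n).symm
        _ ≤ n * (Nat.factorial P).factorization p := Nat.mul_le_mul_left n h1
  set f : ℕ → ℕ × ℕ × ℕ × ℕ × ℕ :=
    fun a => (a, P - 2 - a, n / P, (Nat.factorial (P - 1) + 1) / P,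
      (Nat.factorial P) ^ n / n) with hf
  have hset : {t : ℕ × ℕ × ℕ × ℕ × ℕ |
      (t.1 + t.2.1 + 2) * t.2.2.1 = n ∧
      Nat.factorial (t.1 + t.2.1 + 1) + 1 = t.2.2.2.1 * (t.1 + t.2.1 + 2) ∧
      (Nat.factorial (t.1 + t.2.1 + 2)) ^ n = n * t.2.2.2.2}
      = ↑((Finset.range (P - 1)).image f) := by
    ext ⟨a, b, c, d, e⟩
    simp only [Set.mem_setOf_eq, Finset.coe_image, Set.mem_image, Finset.mem_coe,
      Finset.mem_range]
    constructor
    · rintro ⟨h1, h2, h3⟩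
      set m := a + b + 2 with hm
      have hmn : m ∣ n := ⟨c, h1.symm⟩
      have hmw : m ∣ Nat.factorial (m - 1) + 1 := by
        have : m - 1 = a + b + 1 := by omega
        rw [this]
        exact ⟨d, by rw [h2, mul_comm]⟩
      have hmp : m.Prime := by
        apply Nat.prime_of_fac_equiv_neg_one _ (by omega)
        have : ((Nat.factorial (m - 1) + 1 : ℕ) : ZMod m) = 0 :=
          (ZMod.natCast_eq_zero_iff _ _).mpr hmw
        push_cast at this
        linear_combination this
      have hmP : m ≤ P := hPmax m hmp hmn
      have hPm : P ≤ m := by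
        have h4 : n ∣ (Nat.factorial m) ^ n := ⟨e, h3⟩
        have h5 : P ∣ Nat.factorial m := hP.dvd_of_dvd_pow (hPn.trans h4)
        exact (Nat.Prime.dvd_factorial hP).mp h5
      have hmeq : m = P := le_antisymm hmP hPm
      refine ⟨a, by omega, ?_⟩
      have hc : c = n / P := by
        rw [← h1, hmeq, Nat.mul_div_cancel_left _ hP.pos]
      have hd : d = (Nat.factorial (P - 1) + 1) / P := by
        have h2' : Nat.factorial (P - 1) + 1 = d * P := by
          rw [show P - 1 = a + b + 1 from by omega, h2, hmeq]
        rw [h2', Nat.mul_div_cancel _ hP.pos]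
      have he : e = (Nat.factorial P) ^ n / n := by
        have h3' : (Nat.factorial P) ^ n = n * e := by rw [← hmeq]; exact h3
        rw [h3', Nat.mul_div_cancel_left _ (by omega : 0 < n)]
      have hb : b = P - 2 - a := by omega
      rw [hb, hc, hd, he]
    · rintro ⟨a', ha', hfa⟩
      simp only [hf, Prod.mk.injEq] at hfa
      obtain ⟨rfl, rfl, rfl, rfl, rfl⟩ := hfa
      have hab : a' + (P - 2 - a') + 2 = P := by omega
      rw [hab, show a' + (P - 2 - a') + 1 = P - 1 from by omega]
      exact ⟨Nat.mul_div_cancel' hPn, (Nat.div_mul_cancel hwilson).symm,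
        (Nat.mul_div_cancel' hdvd).symm⟩
  rw [hset, Nat.card_coe_set_eq, Set.ncard_coe_finset,
    Finset.card_image_of_injective _ (fun x y h => congrArg Prod.fst h),
    Finset.card_range]
end

section
/- Let n be a composite squarefree natural number. Then q = gcd(n, ⌊n^(1/ω(n))⌋!) is a non-trivial divisor of n, i.e., q divides n and 1 < q < n. -/
/-- `iroot m n` is the greatest natural number `r` with `r ^ m ≤ n`
(for `m ≥ 1` and `n ≥ 1`, since any such `r` satisfies `r ≤ n`). -/
def iroot (m n : ℕ) : ℕ := Nat.findGreatest (fun r => r ^ m ≤ n) n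

theorem stmt_14 (n : ℕ) (hn : 1 < n) (hcomp : ¬ n.Prime) (hsf : Squarefree n) :
    Nat.gcd n (Nat.factorial (iroot n.primeFactors.card n)) ∣ n ∧
    1 < Nat.gcd n (Nat.factorial (iroot n.primeFactors.card n)) ∧
    Nat.gcd n (Nat.factorial (iroot n.primeFactors.card n)) < n := by
  have hn0 : 0 < n := by omega
  set s := n.primeFactors with hs
  have hsne : s.Nonempty := Nat.nonempty_primeFactors.mpr hn
  have hcard : 2 ≤ s.card := by
    rcases Nat.lt_or_ge s.card 2 with h | h
    · interval_cases hc : s.card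
      · exact absurd (Finset.card_eq_zero.mp hc ▸ hsne) (by simp)
      · obtain ⟨p, hp⟩ := Finset.card_eq_one.mp hc
        have hpmem : p ∈ s := hp ▸ Finset.mem_singleton_self p
        have hpp : p.Prime := Nat.prime_of_mem_primeFactors hpmem
        have : n = p := by
          have hprod : ∏ q ∈ s, q = n := Nat.prod_primeFactors_of_squarefree hsf
          rw [hp] at hprod; simpa using hprod.symm
        exact absurd (this ▸ hpp) hcomp
    · exact h
  have hprod : ∏ q ∈ s, q = n := Nat.prod_primeFactors_of_squarefree hsf
  set p := s.min' hsne with hp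
  set P := s.max' hsne with hP
  have hpmem : p ∈ s := s.min'_mem hsne
  have hPmem : P ∈ s := s.max'_mem hsne
  have hpp : p.Prime := Nat.prime_of_mem_primeFactors hpmem
  have hPp : P.Prime := Nat.prime_of_mem_primeFactors hPmem
  have hpP : p < P := s.min'_lt_max'_of_card (by omega)
  set r := iroot s.card n with hr
  -- p ^ card ≤ n
  have hple : p ^ s.card ≤ n := by
    calc p ^ s.card = ∏ _q ∈ s, p := by rw [Finset.prod_const]
    _ ≤ ∏ q ∈ s, q := Finset.prod_le_prod (fun _ _ => Nat.zero_le _)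
        (fun q hq => s.min'_le q hq)
    _ = n := hprod
  have hplen : p ≤ n := Nat.le_of_dvd hn0 (Nat.dvd_of_mem_primeFactors hpmem)
  have hpr : p ≤ r := Nat.le_findGreatest hplen hple
  -- n < P ^ card
  have hnlt : n < P ^ s.card := by
    calc n = ∏ q ∈ s, q := hprod.symm
    _ < ∏ _q ∈ s, P := by
        refine Finset.prod_lt_prod (fun q hq => (Nat.prime_of_mem_primeFactors hq).pos)
          (fun q hq => s.le_max' q hq) ⟨p, hpmem, hpP⟩
    _ = P ^ s.card := Finset.prod_const P
  -- r < P
  have hrP : r < P := by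
    by_contra h
    push_neg at h
    have : P ^ s.card ≤ r ^ s.card := Nat.pow_le_pow_left h _
    have hrn : r ^ s.card ≤ n :=
      Nat.findGreatest_spec (m := p) (P := fun x => x ^ s.card ≤ n) hplen hple
    omega
  -- conclusions
  have hpdvd : p ∣ Nat.gcd n (Nat.factorial r) :=
    Nat.dvd_gcd (Nat.dvd_of_mem_primeFactors hpmem) (Nat.dvd_factorial hpp.pos hpr)
  refine ⟨Nat.gcd_dvd_left _ _, lt_of_lt_of_le hpp.one_lt (Nat.le_of_dvd ?_ hpdvd), ?_⟩
  · exact Nat.gcd_pos_of_pos_left _ hn0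
  · rcases lt_or_eq_of_le (Nat.le_of_dvd hn0 (Nat.gcd_dvd_left n _)) with h | h
    · exact h
    · exfalso
      have hPd : P ∣ Nat.factorial r :=
        (Nat.dvd_of_mem_primeFactors hPmem).trans (h ▸ Nat.gcd_dvd_right n _)
      exact absurd (hPp.dvd_factorial.mp hPd) (by omega)
end

section
/- Let n > 1 be a composite natural number. Then q = gcd(n / χ(n), ⌊n^(1/ω(n))⌋!) is a non-trivial divisor of n, i.e., q divides n and 1 < q < n. -/
theorem stmt_17 (n : ℕ) (hn : 1 < n) (hcomp : ¬ n.Prime) :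
    Nat.gcd (n / chi n) (Nat.factorial (iroot n.primeFactors.card n)) ∣ n ∧
    1 < Nat.gcd (n / chi n) (Nat.factorial (iroot n.primeFactors.card n)) ∧
    Nat.gcd (n / chi n) (Nat.factorial (iroot n.primeFactors.card n)) < n := by
  have hn0 : 0 < n := by omega
  set ω := n.primeFactors.card with hω
  set r := iroot ω n with hrdef
  set c := chi n with hcdef
  set q := Nat.gcd (n / c) (Nat.factorial r) with hq
  -- basic facts about c
  have hc2 : c ^ 2 ∣ n := by
    have := Nat.findGreatest_spec (P := fun s => s ^ 2 ∣ n) (m := 1)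
      (le_of_lt hn) (by simpa using Nat.one_dvd n)
    simpa [hcdef, chi] using this
  have hc1 : 1 ≤ c := by
    have := Nat.le_findGreatest (P := fun s => s ^ 2 ∣ n) (m := 1)
      (le_of_lt hn) (by simpa using Nat.one_dvd n)
    simpa [hcdef, chi] using this
  have hcdvd : c ∣ n := (dvd_pow_self c (by norm_num : (2:ℕ) ≠ 0)).trans hc2
  have hcdvddiv : c ∣ n / c := by
    rw [Nat.dvd_div_iff_mul_dvd hcdvd]
    simpa [sq] using hc2
  have hdivdvd : n / c ∣ n := Nat.div_dvd_of_dvd hcdvd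
  -- q divides n
  have hqdvdn : q ∣ n := (Nat.gcd_dvd_left _ _).trans hdivdvd
  -- the least prime factor
  set p := n.minFac with hp
  have hpprime : p.Prime := Nat.minFac_prime (by omega)
  have hpdvd : p ∣ n := Nat.minFac_dvd n
  -- p divides n / c
  have hpdvddiv : p ∣ n / c := by
    have : p ∣ c * (n / c) := by
      rwa [Nat.mul_div_cancel' hcdvd]
    rcases (hpprime.dvd_mul).1 this with h | h
    · exact h.trans hcdvddiv
    · exact h
  -- p ^ ω ≤ n
  have hωpos : 0 < ω := by
    rw [hω]
    exact Finset.card_pos.2 ⟨p, Nat.mem_primeFactors.2 ⟨hpprime, hpdvd, by omega⟩⟩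
  have hppow : p ^ ω ≤ n := by
    calc p ^ ω = ∏ _x ∈ n.primeFactors, p := by rw [Finset.prod_const, hω]
    _ ≤ ∏ x ∈ n.primeFactors, x := by
        apply Finset.prod_le_prod'
        intro i hi
        exact Nat.minFac_le_of_dvd (Nat.prime_of_mem_primeFactors hi).two_le
          (Nat.dvd_of_mem_primeFactors hi)
    _ ≤ n := Nat.le_of_dvd hn0 (Nat.prod_primeFactors_dvd n)
  -- p ≤ r
  have hpler : p ≤ r := by
    have := Nat.le_findGreatest (P := fun r => r ^ ω ≤ n) (m := p)
      (Nat.minFac_le hn0) hppow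
    simpa [iroot, hrdef] using this
  -- q > 1
  have hq1 : 1 < q := by
    have hpq : p ∣ q := Nat.dvd_gcd hpdvddiv
      (Nat.dvd_factorial hpprime.pos hpler)
    have : 2 ≤ p := hpprime.two_le
    have hq0 : 0 < q := Nat.pos_of_dvd_of_pos hqdvdn hn0
    calc 1 < p := by omega
    _ ≤ q := Nat.le_of_dvd hq0 hpq
  refine ⟨hqdvdn, hq1, ?_⟩
  -- q < n
  rcases eq_or_lt_of_le hc1 with hc1' | hc1'
  · -- c = 1 : n squarefree
    have hsq : Squarefree n := by
      rw [Nat.squarefree_iff_prime_squarefree]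
      intro x hx hxx
      have hxn : x ≤ n := Nat.le_of_dvd hn0 ((dvd_mul_right x x).trans hxx)
      have hxc : x ≤ c := by
        rw [hcdef, chi]
        exact Nat.le_findGreatest hxn (by simpa [sq] using hxx)
      have := hx.two_le
      omega
    have hprod : ∏ x ∈ n.primeFactors, x = n :=
      Nat.prod_primeFactors_of_squarefree hsq
    -- ω ≥ 2
    have hω2 : 2 ≤ ω := by
      by_contra h
      have hcard1 : n.primeFactors.card = 1 := by omega
      obtain ⟨x, hxeq⟩ := Finset.card_eq_one.1 hcard1
      rw [hxeq, Finset.prod_singleton] at hprod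
      exact hcomp (hprod ▸ Nat.prime_of_mem_primeFactors
        (hxeq ▸ Finset.mem_singleton_self x))
    -- largest prime factor P
    have hne : n.primeFactors.Nonempty := Finset.card_pos.1 (by omega)
    set P := n.primeFactors.max' hne with hP
    have hPmem : P ∈ n.primeFactors := n.primeFactors.max'_mem hne
    have hPprime : P.Prime := Nat.prime_of_mem_primeFactors hPmem
    have hPdvd : P ∣ n := Nat.dvd_of_mem_primeFactors hPmem
    -- n < P ^ ω
    have hlt : n < P ^ ω := by
      calc n = ∏ x ∈ n.primeFactors, x := hprod.symm
      _ < ∏ _x ∈ n.primeFactors, P := by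
          apply Finset.prod_lt_prod
          · intro i hi; exact (Nat.prime_of_mem_primeFactors hi).pos
          · intro i hi; exact Finset.le_max' _ _ hi
          · refine ⟨n.primeFactors.min' hne, n.primeFactors.min'_mem hne, ?_⟩
            exact Finset.min'_lt_max'_of_card _ (by omega)
      _ = P ^ ω := by rw [Finset.prod_const, hω]
    -- r < P
    have hrP : r < P := by
      by_contra h
      push_neg at h
      have hr1 : r ^ ω ≤ n := by
        have := Nat.findGreatest_spec (P := fun r => r ^ ω ≤ n) (m := 1)
          (le_of_lt hn) (by simpa using Nat.one_le_iff_ne_zero.mpr hn0.ne')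
        simpa [iroot, hrdef] using this
      have : P ^ ω ≤ r ^ ω := Nat.pow_le_pow_left h ω
      omega
    -- P does not divide r!
    have hPnr : ¬ P ∣ Nat.factorial r := by
      rw [Nat.Prime.dvd_factorial hPprime]
      omega
    -- hence q ≠ n
    have hqne : q ≠ n := by
      intro h
      exact hPnr ((h ▸ hPdvd : P ∣ q).trans (Nat.gcd_dvd_right _ _))
    exact lt_of_le_of_ne (Nat.le_of_dvd hn0 hqdvdn) hqne
  · -- c > 1 : n/c < n
    have hdivlt : n / c < n := Nat.div_lt_self hn0 hc1'
    have hdivpos : 0 < n / c := Nat.pos_of_dvd_of_pos hpdvddiv (Nat.pos_of_dvd_of_pos hdivdvd hn0) |>.trans_le (Nat.le_of_dvd (Nat.pos_of_dvd_of_pos hdivdvd hn0) hpdvddiv) |> fun _ => Nat.pos_of_dvd_of_pos hdivdvd hn0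
    calc q ≤ n / c := Nat.le_of_dvd hdivpos (Nat.gcd_dvd_left _ _)
    _ < n := hdivlt
end

section
/- Let n > 1 be a composite natural number. Then q = (2 ∸ χ(n)) · gcd(n, ⌊n^(1/ω(n))⌋!) + (1 ∸ (2 ∸ χ(n))) · χ(n) is a non-trivial divisor of n, i.e., q divides n and 1 < q < n. -/
theorem stmt_18 (n : ℕ) (hn : 1 < n) (hcomp : ¬ n.Prime) :
    (2 - chi n) * Nat.gcd n (Nat.factorial (iroot n.primeFactors.card n)) +
        (1 - (2 - chi n)) * chi n ∣ n ∧
    1 < (2 - chi n) * Nat.gcd n (Nat.factorial (iroot n.primeFactors.card n)) +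
        (1 - (2 - chi n)) * chi n ∧
    (2 - chi n) * Nat.gcd n (Nat.factorial (iroot n.primeFactors.card n)) +
        (1 - (2 - chi n)) * chi n < n := by
  have hn0 : 0 < n := by omega
  have hchi1 : 1 ≤ chi n :=
    Nat.le_findGreatest (le_of_lt hn) (by simp)
  rcases eq_or_lt_of_le hchi1 with h1 | h2
  · -- chi n = 1, n squarefree
    have hchi : chi n = 1 := h1.symm
    have hsq : Squarefree n := by
      rw [Nat.squarefree_iff_prime_squarefree]
      intro p hp hpn
      have hp2 := hp.two_le
      have hple : p ≤ n := le_trans (Nat.le_mul_of_pos_left p (hp.pos)) (Nat.le_of_dvd hn0 hpn)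
      have hle := Nat.le_findGreatest (P := fun s => s ^ 2 ∣ n)
        hple (show p ^ 2 ∣ n by rwa [pow_two])
      rw [← chi] at hle
      omega
    have hprod : ∏ p ∈ n.primeFactors, p = n := Nat.prod_primeFactors_of_squarefree hsq
    set m := n.primeFactors.card with hm
    have hne : n.primeFactors.Nonempty := Nat.nonempty_primeFactors.2 hn
    have hm2 : 2 ≤ m := by
      rcases Nat.lt_or_ge m 2 with h | h
      · exfalso
        have hpos : 1 ≤ m := Finset.card_pos.2 hne
        have hone : n.primeFactors.card = 1 := by omega
        obtain ⟨p, hp⟩ := Finset.card_eq_one.1 hone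
        have hnp : n = p := by rw [← hprod, hp, Finset.prod_singleton]
        exact hcomp (hnp ▸ Nat.prime_of_mem_primeFactors
          (hp ▸ Finset.mem_singleton_self p))
      · exact h
    have hminle : ∀ p ∈ n.primeFactors, n.minFac ≤ p := fun p hp =>
      Nat.minFac_le_of_dvd (Nat.prime_of_mem_primeFactors hp).two_le
        (Nat.dvd_of_mem_primeFactors hp)
    have hpowle : n.minFac ^ m ≤ n := by
      calc n.minFac ^ m = ∏ _p ∈ n.primeFactors, n.minFac := by
            rw [Finset.prod_const, hm]
        _ ≤ ∏ p ∈ n.primeFactors, p := Finset.prod_le_prod (fun _ _ => Nat.zero_le _) hminle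
        _ = n := hprod
    have hminfac_le_iroot : n.minFac ≤ iroot m n :=
      Nat.le_findGreatest (Nat.minFac_le hn0) hpowle
    have hdvdfac : n.minFac ∣ Nat.factorial (iroot m n) :=
      Nat.dvd_factorial (Nat.minFac_pos n) hminfac_le_iroot
    have hdvdgcd : n.minFac ∣ Nat.gcd n (Nat.factorial (iroot m n)) :=
      Nat.dvd_gcd (Nat.minFac_dvd n) hdvdfac
    have hgcdpos : 0 < Nat.gcd n (Nat.factorial (iroot m n)) :=
      Nat.gcd_pos_of_pos_left _ hn0
    have hgcd1 : 1 < Nat.gcd n (Nat.factorial (iroot m n)) :=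
      lt_of_lt_of_le (Nat.minFac_prime (by omega)).one_lt (Nat.le_of_dvd hgcdpos hdvdgcd)
    obtain ⟨P, hPmem, hPmax⟩ := n.primeFactors.exists_max_image id hne
    have hPprime := Nat.prime_of_mem_primeFactors hPmem
    have hrest : P * ∏ p ∈ n.primeFactors.erase P, p = n := by
      rw [mul_comm]
      exact (Finset.prod_erase_mul _ _ hPmem).trans hprod
    have hPpown : n < P ^ m := by
      have hcard : (n.primeFactors.erase P).card = m - 1 := by
        rw [Finset.card_erase_of_mem hPmem, hm]
      have hlt : ∏ p ∈ n.primeFactors.erase P, p ≤ (P - 1) ^ (m - 1) := by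
        calc ∏ p ∈ n.primeFactors.erase P, p ≤ ∏ _p ∈ n.primeFactors.erase P, (P - 1) :=
              Finset.prod_le_prod (fun _ _ => Nat.zero_le _) (fun p hp => by
                have hle := hPmax p (Finset.mem_of_mem_erase hp)
                have hne' := Finset.ne_of_mem_erase hp
                simp only [id] at hle
                omega)
          _ = (P - 1) ^ (m - 1) := by rw [Finset.prod_const, hcard]
      have hP1 : (P - 1) ^ (m - 1) < P ^ (m - 1) :=
        Nat.pow_lt_pow_left (by have := hPprime.two_le; omega) (by omega)
      calc n = P * ∏ p ∈ n.primeFactors.erase P, p := hrest.symm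
        _ ≤ P * (P - 1) ^ (m - 1) := Nat.mul_le_mul_left _ hlt
        _ < P * P ^ (m - 1) := (Nat.mul_lt_mul_left hPprime.pos).2 hP1
        _ = P ^ m := by rw [← pow_succ']; congr 1; omega
    have hiroot1 : 1 ≤ iroot m n :=
      Nat.le_findGreatest (le_of_lt hn) (by simpa using hn.le)
    have hspec : iroot m n ^ m ≤ n := by
      have h0 : iroot m n ≠ 0 := by omega
      unfold iroot at h0 ⊢
      exact Nat.findGreatest_of_ne_zero (P := fun r => r ^ m ≤ n) rfl h0
    have hiroot_lt_P : iroot m n < P := by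
      by_contra h
      push_neg at h
      have hPP : P ^ m ≤ iroot m n ^ m := Nat.pow_le_pow_left h m
      omega
    have hndvd : ¬ n ∣ Nat.factorial (iroot m n) := fun h => by
      have hPd : P ∣ Nat.factorial (iroot m n) := (Nat.dvd_of_mem_primeFactors hPmem).trans h
      rw [Nat.Prime.dvd_factorial hPprime] at hPd
      omega
    have hgcdn : Nat.gcd n (Nat.factorial (iroot m n)) < n := by
      rcases lt_or_eq_of_le (Nat.le_of_dvd hn0 (Nat.gcd_dvd_left n _)) with h | h
      · exact h
      · exfalso
        apply hndvd
        have hg := Nat.gcd_dvd_right n (Nat.factorial (iroot m n))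
        rwa [h] at hg
    rw [hchi]
    refine ⟨?_, ?_, ?_⟩ <;> simp [Nat.gcd_dvd_left, hgcd1, hgcdn]
  · -- chi n ≥ 2
    have hsub : 2 - chi n = 0 := by omega
    have hspec : chi n ^ 2 ∣ n := by
      have h0 : chi n ≠ 0 := by omega
      unfold chi at h0 ⊢
      exact Nat.findGreatest_of_ne_zero (P := fun s => s ^ 2 ∣ n) rfl h0
    have hdvd : chi n ∣ n := (dvd_pow_self (chi n) two_ne_zero).trans hspec
    have hlt : chi n < n := by
      have hh1 : chi n ^ 2 ≤ n := Nat.le_of_dvd hn0 hspec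
      nlinarith
    rw [hsub]
    simpa using ⟨hdvd, h2, hlt⟩
end
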